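/- Fix integers r ≥ 1 and k ≥ 0 and two weight vectors m, n : Fin (k+1) → ZMod r all of whose values are units. Then the relations ⪰_m and ⪰_n on Fin (k+1) × ZMod r are equal if and only if for every i = 1, …, k one has Nat.gcd ((m_{i+1} − m_i : ZMod r).val) r = Nat.gcd ((n_{i+1} − n_i : ZMod r).val) r. -/

import Mathlib

/-- The relation `(i,j) ≻_m (i',j')` on `Fin (k+1) × ZMod r`: it holds iff `i < i'`
and there exists `n ∈ ZMod r` with `n·(m i − m i') = j − j'`. -/
def succRel (r k : ℕ) (m : Fin (k + 1) → ZMod r) :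
    Fin (k + 1) × ZMod r → Fin (k + 1) × ZMod r → Prop :=
  fun p q => p.1 < q.1 ∧ ∃ n : ZMod r, n * (m p.1 - m q.1) = p.2 - q.2

section aux

variable {r k : ℕ}

lemma mul_mem_addSubgroup [NeZero r] (H : AddSubgroup (ZMod r)) {x : ZMod r} (hx : x ∈ H)
    (c : ZMod r) : c * x ∈ H := by
  have h : c * x = c.val • x := by
    rw [nsmul_eq_mul, ZMod.natCast_val, ZMod.cast_id]
  rw [h]
  exact AddSubgroup.nsmul_mem H hx c.val

lemma mem_closure_singleton_iff [NeZero r] {a x : ZMod r} :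
    x ∈ AddSubgroup.closure {a} ↔ ∃ c : ZMod r, c * a = x := by
  rw [AddSubgroup.mem_closure_singleton]
  constructor
  · rintro ⟨n, rfl⟩
    exact ⟨(n : ZMod r), by rw [← zsmul_eq_mul]⟩
  · rintro ⟨c, rfl⟩
    refine ⟨(c.val : ℤ), ?_⟩
    rw [zsmul_eq_mul]
    push_cast [ZMod.natCast_val, ZMod.cast_id]
    rfl

lemma exists_mul_eq_iff_gcd_dvd (hr : 0 < r) (a x : ZMod r) :
    (∃ c : ZMod r, c * a = x) ↔ Nat.gcd a.val r ∣ x.val := by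
  haveI : NeZero r := ⟨hr.ne'⟩
  set g := Nat.gcd a.val r with hg
  have hga : g ∣ a.val := Nat.gcd_dvd_left _ _
  have hgr : g ∣ r := Nat.gcd_dvd_right _ _
  constructor
  · rintro ⟨c, rfl⟩
    rw [ZMod.val_mul]
    exact (Nat.dvd_mod_iff hgr).mpr (hga.mul_left c.val)
  · intro hdvd
    have hbez : (g : ℤ) = a.val * Nat.gcdA a.val r + r * Nat.gcdB a.val r :=
      Nat.gcd_eq_gcd_ab _ _
    have hgz : ((g : ℕ) : ZMod r) = (Nat.gcdA a.val r : ZMod r) * a := by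
      have := congrArg (fun z : ℤ => (z : ZMod r)) hbez
      push_cast at this
      rw [this, ZMod.natCast_self, ZMod.natCast_val, ZMod.cast_id]
      ring
    refine ⟨((x.val / g : ℕ) : ZMod r) * (Nat.gcdA a.val r : ZMod r), ?_⟩
    rw [mul_assoc, ← hgz, ← Nat.cast_mul, Nat.div_mul_cancel hdvd,
      ZMod.natCast_val, ZMod.cast_id]

/-- the set of consecutive differences of `m` on the interval `[i, i')`. -/
def dset (m : Fin (k + 1) → ZMod r) (i i' : ℕ) : Set (ZMod r) :=
  {x | ∃ a : Fin k, i ≤ (a : ℕ) ∧ (a : ℕ) < i' ∧ x = m a.succ - m a.castSucc}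

lemma dset_mono (m : Fin (k + 1) → ZMod r) {i i' j j' : ℕ} (h1 : j ≤ i) (h2 : i' ≤ j') :
    dset m i i' ⊆ dset m j j' := by
  rintro x ⟨a, h3, h4, rfl⟩
  exact ⟨a, by omega, by omega, rfl⟩

lemma dset_self (m : Fin (k + 1) → ZMod r) {i i' : ℕ} (h : i' ≤ i) : dset m i i' = ∅ := by
  ext x
  simp only [dset, Set.mem_setOf_eq, Set.mem_empty_iff_false, iff_false]
  rintro ⟨a, h1, h2, -⟩
  omega

lemma dset_split (m : Fin (k + 1) → ZMod r) {i i' : ℕ} (h : i < i') (hk : i' ≤ k) :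
    dset m i i' =
      insert (m ⟨i + 1, by omega⟩ - m ⟨i, by omega⟩) (dset m (i + 1) i') := by
  have hik : i < k := by omega
  ext x
  simp only [dset, Set.mem_setOf_eq, Set.mem_insert_iff]
  constructor
  · rintro ⟨a, h1, h2, rfl⟩
    rcases eq_or_lt_of_le h1 with heq | hlt
    · left
      have ha : a = ⟨i, hik⟩ := Fin.ext heq.symm
      subst ha
      congr 1
    · right
      exact ⟨a, hlt, h2, rfl⟩
  · rintro (rfl | ⟨a, h1, h2, rfl⟩)
    · refine ⟨⟨i, hik⟩, le_rfl, h, ?_⟩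
      congr 1
    · exact ⟨a, by omega, h2, rfl⟩

lemma telescope (m : Fin (k + 1) → ZMod r) :
    ∀ g : ℕ, ∀ i i' : Fin (k + 1), (i' : ℕ) = (i : ℕ) + g →
      m i' - m i ∈ AddSubgroup.closure (dset m i i') := by
  intro g
  induction g with
  | zero =>
    intro i i' h
    have : i' = i := Fin.ext (by omega)
    subst this
    simpa using zero_mem _
  | succ g ih =>
    intro i i' h
    have hi' : (i' : ℕ) < k + 1 := i'.isLt
    have hik : (i : ℕ) < k := by omega
    set i₁ : Fin (k + 1) := ⟨(i : ℕ) + 1, by omega⟩ with hi₁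
    have h1 : m i₁ - m i ∈ dset m (i : ℕ) (i' : ℕ) := by
      exact ⟨⟨i, hik⟩, le_rfl, by simpa using (by omega : (i : ℕ) < (i' : ℕ)), rfl⟩
    have h2 : m i' - m i₁ ∈ AddSubgroup.closure (dset m (i₁ : ℕ) (i' : ℕ)) :=
      ih i₁ i' (by simp [hi₁]; omega)
    have h2' : m i' - m i₁ ∈ AddSubgroup.closure (dset m (i : ℕ) (i' : ℕ)) :=
      AddSubgroup.closure_mono (dset_mono m (by simp [hi₁]) le_rfl) h2
    have := add_mem h2' (AddSubgroup.subset_closure h1)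
    simpa using this

lemma char_back (hr : 0 < r) (m : Fin (k + 1) → ZMod r) :
    ∀ g : ℕ, ∀ p q : Fin (k + 1) × ZMod r, (q.1 : ℕ) = (p.1 : ℕ) + g →
      p.2 - q.2 ∈ AddSubgroup.closure (dset m (p.1 : ℕ) (q.1 : ℕ)) →
      Relation.ReflTransGen (succRel r k m) p q := by
  haveI : NeZero r := ⟨hr.ne'⟩
  intro g
  induction g with
  | zero =>
    intro p q hg hmem
    have h1 : p.1 = q.1 := Fin.ext (by omega)
    rw [dset_self m (by omega), AddSubgroup.closure_empty, AddSubgroup.mem_bot,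
      sub_eq_zero] at hmem
    have : p = q := Prod.ext h1 hmem
    subst this
    exact Relation.ReflTransGen.refl
  | succ g ih =>
    intro p q hg hmem
    have hq : (q.1 : ℕ) < k + 1 := q.1.isLt
    have hlt : (p.1 : ℕ) < (q.1 : ℕ) := by omega
    rw [dset_split m hlt (by omega), ← Set.singleton_union,
      AddSubgroup.closure_union, AddSubgroup.mem_sup] at hmem
    obtain ⟨u, hu, v, hv, huv⟩ := hmem
    rw [mem_closure_singleton_iff] at hu
    obtain ⟨c, rfl⟩ := hu
    set i₁ : Fin (k + 1) := ⟨(p.1 : ℕ) + 1, by omega⟩ with hi₁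
    refine Relation.ReflTransGen.head (b := (i₁, p.2 - c * (m i₁ - m p.1))) ?_ ?_
    · exact ⟨by simp [Fin.lt_def, hi₁], ⟨-c, by ring⟩⟩
    · refine ih (i₁, p.2 - c * (m i₁ - m p.1)) q (by simp [hi₁]; omega) ?_
      have hveq : (p.2 - c * (m i₁ - m p.1)) - q.2 = v := by
        linear_combination -huv
      show (p.2 - c * (m i₁ - m p.1)) - q.2 ∈ AddSubgroup.closure (dset m (i₁ : ℕ) (q.1 : ℕ))
      rw [hveq]
      exact hv

lemma char (hr : 0 < r) (m : Fin (k + 1) → ZMod r) (p q : Fin (k + 1) × ZMod r) :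
    Relation.ReflTransGen (succRel r k m) p q ↔
      p.1 ≤ q.1 ∧ p.2 - q.2 ∈ AddSubgroup.closure (dset m (p.1 : ℕ) (q.1 : ℕ)) := by
  haveI : NeZero r := ⟨hr.ne'⟩
  constructor
  · intro h
    induction h with
    | refl => exact ⟨le_rfl, by simpa using zero_mem _⟩
    | @tail b c hab hbc ih =>
      obtain ⟨h1, h2⟩ := ih
      obtain ⟨hlt, cc, hcc⟩ := hbc
      refine ⟨h1.trans hlt.le, ?_⟩
      have ht : m c.1 - m b.1 ∈ AddSubgroup.closure (dset m (b.1 : ℕ) (c.1 : ℕ)) :=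
        telescope m ((c.1 : ℕ) - (b.1 : ℕ)) b.1 c.1 (by
          have := (Fin.lt_def.mp hlt)
          omega)
      have hb : b.2 - c.2 ∈ AddSubgroup.closure (dset m (b.1 : ℕ) (c.1 : ℕ)) := by
        rw [← hcc]
        have : cc * (m b.1 - m c.1) = (-cc) * (m c.1 - m b.1) := by ring
        rw [this]
        exact mul_mem_addSubgroup _ ht _
      have h2' : p.2 - b.2 ∈ AddSubgroup.closure (dset m (p.1 : ℕ) (c.1 : ℕ)) :=
        AddSubgroup.closure_mono (dset_mono m le_rfl (le_of_lt (Fin.lt_def.mp hlt))) h2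
      have hb' : b.2 - c.2 ∈ AddSubgroup.closure (dset m (p.1 : ℕ) (c.1 : ℕ)) :=
        AddSubgroup.closure_mono (dset_mono m h1 le_rfl) hb
      have := add_mem h2' hb'
      simpa using this
  · rintro ⟨hle, hmem⟩
    exact char_back hr m ((q.1 : ℕ) - (p.1 : ℕ)) p q (by omega) hmem

lemma dset_singleton (m : Fin (k + 1) → ZMod r) (i : Fin k) :
    dset m (i.castSucc : ℕ) (i.succ : ℕ) = {m i.succ - m i.castSucc} := by
  ext x
  simp only [dset, Set.mem_setOf_eq, Set.mem_singleton_iff, Fin.coe_castSucc, Fin.val_succ]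
  constructor
  · rintro ⟨a, h1, h2, rfl⟩
    have : a = i := Fin.ext (by omega)
    subst this
    rfl
  · rintro rfl
    exact ⟨i, le_rfl, by omega, rfl⟩

lemma closure_dset_eq (hr : 0 < r) (m n : Fin (k + 1) → ZMod r)
    (h : ∀ i : Fin k,
      Nat.gcd ((m i.succ - m i.castSucc).val) r = Nat.gcd ((n i.succ - n i.castSucc).val) r)
    (i i' : ℕ) :
    AddSubgroup.closure (dset m i i') ≤ AddSubgroup.closure (dset n i i') := by
  haveI : NeZero r := ⟨hr.ne'⟩
  rw [AddSubgroup.closure_le]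
  rintro x ⟨a, h1, h2, rfl⟩
  have hdvd : Nat.gcd ((n a.succ - n a.castSucc).val) r ∣ (m a.succ - m a.castSucc).val := by
    rw [← h a]; exact Nat.gcd_dvd_left _ _
  obtain ⟨c, hc⟩ := (exists_mul_eq_iff_gcd_dvd hr _ _).mpr hdvd
  rw [← hc]
  exact mul_mem_addSubgroup _ (AddSubgroup.subset_closure
    (show n a.succ - n a.castSucc ∈ dset n i i' from ⟨a, h1, h2, rfl⟩)) _

end aux

theorem stmt_5 (r k : ℕ) (hr : 1 ≤ r) (m n : Fin (k + 1) → ZMod r)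
    (hm : ∀ i, IsUnit (m i)) (hn : ∀ i, IsUnit (n i)) :
    Relation.ReflTransGen (succRel r k m) = Relation.ReflTransGen (succRel r k n) ↔
      ∀ i : Fin k,
        Nat.gcd ((m i.succ - m i.castSucc).val) r
          = Nat.gcd ((n i.succ - n i.castSucc).val) r := by
  haveI : NeZero r := ⟨by omega⟩
  have hr0 : 0 < r := hr
  constructor
  · intro h i
    have key : ∀ x : ZMod r,
        (∃ c : ZMod r, c * (m i.succ - m i.castSucc) = x) ↔
        (∃ c : ZMod r, c * (n i.succ - n i.castSucc) = x) := by
      intro x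
      have h1 := char hr0 m (i.castSucc, x) (i.succ, 0)
      have h2 := char hr0 n (i.castSucc, x) (i.succ, 0)
      rw [h, h2] at h1
      simp only [dset_singleton, sub_zero, mem_closure_singleton_iff] at h1
      have hle : (i.castSucc : Fin (k+1)) ≤ i.succ := (Fin.castSucc_lt_succ : i.castSucc < i.succ).le
      constructor
      · intro hx; exact (h1.mpr ⟨hle, hx⟩).2
      · intro hx; exact (h1.mp ⟨hle, hx⟩).2
    have d1 : Nat.gcd ((n i.succ - n i.castSucc).val) r ∣ (m i.succ - m i.castSucc).val :=
      (exists_mul_eq_iff_gcd_dvd hr0 _ _).mp ((key _).mp ⟨1, one_mul _⟩)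
    have d2 : Nat.gcd ((m i.succ - m i.castSucc).val) r ∣ (n i.succ - n i.castSucc).val :=
      (exists_mul_eq_iff_gcd_dvd hr0 _ _).mp ((key _).mpr ⟨1, one_mul _⟩)
    exact Nat.dvd_antisymm
      (Nat.dvd_gcd d2 (Nat.gcd_dvd_right _ _))
      (Nat.dvd_gcd d1 (Nat.gcd_dvd_right _ _))
  · intro h
    funext p q
    rw [char hr0 m p q, char hr0 n p q]
    have hc : AddSubgroup.closure (dset m (p.1 : ℕ) (q.1 : ℕ))
        = AddSubgroup.closure (dset n (p.1 : ℕ) (q.1 : ℕ)) :=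
      le_antisymm (closure_dset_eq hr0 m n h _ _)
        (closure_dset_eq hr0 n m (fun i => (h i).symm) _ _)
    rw [hc]
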